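/- arXiv:1304.4578 — 4 statements merged into one kernel-verified Lean document; each statement's English description precedes it below -/
import Mathlib

section
/- Let ξ_1,…,ξ_M and ζ_1,…,ζ_N be mutually independent real random variables, all identically distributed with a common even probability density p, and let z = ξ + ζ where ξ, ζ are independent with density p. Then for every u ∈ ℝ, the variance of the real part of the array pattern satisfies Var[Re β(u)] = (1/(2MN))(1 + ψ_z(2u)) + ψ_z(u)·[ ((N+M−2)/(2MN))·(1 + ψ_ξ(2u)) − ψ_z(u)·(N+M−1)/(MN) ], where ψ_ξ is the (common) characteristic function of ξ. -/
open MeasureTheory ProbabilityTheory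

/-- Characteristic function `ψ_x(u) = E[exp(i u x)]` of a real random variable `x`
under the measure `P`. -/
noncomputable def charFn {Ω : Type*} [MeasurableSpace Ω] (P : Measure Ω) (x : Ω → ℝ)
    (u : ℝ) : ℂ :=
  ∫ ω, Complex.exp (Complex.I * ((u * x ω : ℝ) : ℂ)) ∂P

/-- The random array pattern
`β(u) = (1/(MN)) Σ_{m=1}^{M} Σ_{n=1}^{N} exp(i u (ζ_n + ξ_m))`. -/
noncomputable def arrayPattern {Ω : Type*} {M N : ℕ} (ξ : Fin M → Ω → ℝ) (ζ : Fin N → Ω → ℝ)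
    (u : ℝ) (ω : Ω) : ℂ :=
  (1 / (M * N) : ℂ) *
    ∑ m : Fin M, ∑ n : Fin N, Complex.exp (Complex.I * ((u * (ζ n ω + ξ m ω) : ℝ) : ℂ))

section Helpers

open MeasureTheory ProbabilityTheory Complex

variable {Ω : Type*} [MeasurableSpace Ω] {P : Measure Ω} [IsProbabilityMeasure P]

/-- E[g(X) h(Y)] = E[g(X)] E[h(Y)] for independent X Y. -/
lemma indep_integral_comp_mul {α γ : Type*} [MeasurableSpace α] [MeasurableSpace γ]
    {X : Ω → α} {Y : Ω → γ} (hX : Measurable X) (hY : Measurable Y)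
    (h : IndepFun X Y P) {g : α → ℂ} {h' : γ → ℂ} (hg : Measurable g) (hh : Measurable h') :
    ∫ ω, g (X ω) * h' (Y ω) ∂P = (∫ ω, g (X ω) ∂P) * ∫ ω, h' (Y ω) ∂P := by
  have hmap := (indepFun_iff_map_prod_eq_prod_map_map hX.aemeasurable hY.aemeasurable).mp h
  have hme : AEStronglyMeasurable (fun p : α × γ => g p.1 * h' p.2)
      (P.map fun ω => (X ω, Y ω)) :=
    ((hg.comp measurable_fst).mul (hh.comp measurable_snd)).aestronglyMeasurable
  calc ∫ ω, g (X ω) * h' (Y ω) ∂P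
      = ∫ p, g p.1 * h' p.2 ∂(P.map fun ω => (X ω, Y ω)) :=
        (integral_map (hX.prodMk hY).aemeasurable hme).symm
    _ = ∫ p, g p.1 * h' p.2 ∂((P.map X).prod (P.map Y)) := by rw [hmap]
    _ = (∫ x, g x ∂P.map X) * ∫ y, h' y ∂P.map Y := integral_prod_mul g h'
    _ = _ := by
        rw [integral_map hX.aemeasurable hg.aestronglyMeasurable,
          integral_map hY.aemeasurable hh.aestronglyMeasurable]

/-- product of independent complex r.v.s over a finset -/
lemma iIndep_integral_prod {J : Type*} {W : J → Ω → ℂ}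
    (hW : iIndepFun W P) (hWm : ∀ j, Measurable (W j))
    (s : Finset J) :
    ∫ ω, ∏ j ∈ s, W j ω ∂P = ∏ j ∈ s, ∫ ω, W j ω ∂P := by
  classical
  induction s using Finset.induction_on with
  | empty => simp
  | @insert j s hj ih =>
    have hint : IndepFun (W j) (fun ω => ∏ i ∈ s, W i ω) P := by
      have h2 := (hW.indepFun_finsetProd_of_notMem hWm hj).symm
      have : (∏ i ∈ s, W i) = fun ω => ∏ i ∈ s, W i ω := by
        funext ω; simp [Finset.prod_apply]
      rwa [this] at h2
    have hmeas : Measurable (fun ω => ∏ i ∈ s, W i ω) :=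
      Finset.measurable_prod s fun i _ => hWm i
    simp only [Finset.prod_insert hj]
    have := indep_integral_comp_mul (hWm j) hmeas hint measurable_id measurable_id
    simp only [id] at this
    rw [this, ih]

lemma meas_exp_I_mul {γ : Type*} [MeasurableSpace γ] {θ : γ → ℝ} (hθ : Measurable θ) :
    Measurable (fun x => Complex.exp (Complex.I * θ x)) :=
  Complex.measurable_exp.comp (measurable_const.mul (Complex.measurable_ofReal.comp hθ))

lemma norm_exp_I_mul (r : ℝ) : ‖Complex.exp (Complex.I * r)‖ = 1 := by
  rw [Complex.norm_exp]; simp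

lemma integrable_exp_I_mul {θ : Ω → ℝ} (hθ : Measurable θ) :
    Integrable (fun ω => Complex.exp (Complex.I * θ ω)) P := by
  refine (integrable_const (1:ℝ)).mono' (meas_exp_I_mul hθ).aestronglyMeasurable ?_
  exact Filter.Eventually.of_forall fun ω => by rw [norm_exp_I_mul]

noncomputable def Phi (μ : Measure ℝ) (t : ℝ) : ℂ :=
  ∫ x, Complex.exp (Complex.I * t * x) ∂μ

lemma Phi_integrand (t x : ℝ) :
    Complex.exp (Complex.I * t * x) = Complex.exp (Complex.I * ((t * x : ℝ) : ℂ)) := by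
  push_cast; ring_nf

lemma Phi_zero (μ : Measure ℝ) [IsProbabilityMeasure μ] : Phi μ 0 = 1 := by
  simp [Phi]

lemma Phi_neg {μ : Measure ℝ} [IsProbabilityMeasure μ]
    (heven : Measure.map (fun x : ℝ => -x) μ = μ) (t : ℝ) : Phi μ (-t) = Phi μ t := by
  have : Phi μ t = ∫ x, Complex.exp (Complex.I * t * x) ∂(Measure.map (fun x : ℝ => -x) μ) := by
    rw [heven]; rfl
  rw [Phi, this, integral_map measurable_neg.aemeasurable]
  · congr 1; funext x; push_cast; ring_nf
  · have : Measurable fun x : ℝ => Complex.exp (Complex.I * t * x) := by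
      have := meas_exp_I_mul (γ := ℝ) measurable_id (θ := fun x => x)
      simp only [Phi_integrand]
      exact meas_exp_I_mul (measurable_const.mul measurable_id)
    exact this.aestronglyMeasurable

lemma Phi_real {μ : Measure ℝ} [IsProbabilityMeasure μ]
    (heven : Measure.map (fun x : ℝ => -x) μ = μ) (t : ℝ) :
    Phi μ t = ((Phi μ t).re : ℂ) := by
  have hconj : (starRingEnd ℂ) (Phi μ t) = Phi μ (-t) := by
    rw [Phi, ← integral_conj]
    congr 1; funext x
    rw [← Complex.exp_conj]
    simp only [map_mul, Complex.conj_I, Complex.conj_ofReal]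
    push_cast
    ring
  rw [Phi_neg heven] at hconj
  exact (Complex.conj_eq_iff_re.mp hconj).symm

lemma key_integral {J : Type*} [Fintype J] {V : J → Ω → ℝ} (hVm : ∀ j, Measurable (V j))
    (hindep : iIndepFun V P)
    {μ : Measure ℝ} [IsProbabilityMeasure μ] (hVmap : ∀ j, P.map (V j) = μ) (c : J → ℝ) :
    ∫ ω, Complex.exp (Complex.I * ((∑ j, c j * V j ω : ℝ) : ℂ)) ∂P = ∏ j, Phi μ (c j) := by
  classical
  have hexp : ∀ ω, Complex.exp (Complex.I * ((∑ j, c j * V j ω : ℝ) : ℂ))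
      = ∏ j, Complex.exp (Complex.I * ((c j * V j ω : ℝ) : ℂ)) := by
    intro ω
    rw [← Complex.exp_sum]
    congr 1
    push_cast
    rw [Finset.mul_sum]
  simp only [hexp]
  have hW : iIndepFun
      (fun j => (fun x : ℝ => Complex.exp (Complex.I * ((c j * x : ℝ) : ℂ))) ∘ V j) P :=
    hindep.comp _ (fun j => meas_exp_I_mul (measurable_const.mul measurable_id))
  have hWm : ∀ j, Measurable
      ((fun x : ℝ => Complex.exp (Complex.I * ((c j * x : ℝ) : ℂ))) ∘ V j) :=
    fun j => (meas_exp_I_mul (measurable_const.mul measurable_id)).comp (hVm j)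
  have := iIndep_integral_prod hW hWm Finset.univ
  simp only [Function.comp] at this
  rw [this]
  refine Finset.prod_congr rfl fun j _ => ?_
  have hg : Measurable fun x : ℝ => Complex.exp (Complex.I * ((c j * x : ℝ) : ℂ)) :=
    meas_exp_I_mul (measurable_const.mul measurable_id)
  rw [Phi]
  simp only [Phi_integrand]
  rw [← hVmap j, integral_map (hVm j).aemeasurable hg.aestronglyMeasurable]

lemma cos_integral {J : Type*} [Fintype J] {V : J → Ω → ℝ} (hVm : ∀ j, Measurable (V j))
    (hindep : iIndepFun V P)
    {μ : Measure ℝ} [IsProbabilityMeasure μ] (hVmap : ∀ j, P.map (V j) = μ) (c : J → ℝ) :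
    ∫ ω, Real.cos (∑ j, c j * V j ω) ∂P = (∏ j, Phi μ (c j)).re := by
  have hθ : Measurable (fun ω => ∑ j, c j * V j ω) :=
    Finset.measurable_sum _ fun j _ => measurable_const.mul (hVm j)
  have hint : Integrable (fun ω => Complex.exp (Complex.I * ((∑ j, c j * V j ω : ℝ) : ℂ))) P :=
    integrable_exp_I_mul hθ
  rw [← key_integral hVm hindep hVmap c]
  have h2 := integral_re hint
  simp only [RCLike.re_to_complex] at h2
  rw [← h2]
  congr 1; funext ω
  rw [mul_comm]
  exact (Complex.exp_ofReal_mul_I_re _).symm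

lemma prod_phi_two {α : Type*} [Fintype α] [DecidableEq α] {Ψ : ℝ → ℂ} (h0 : Ψ 0 = 1)
    (i k : α) (x y : ℝ) :
    ∏ j, Ψ ((if j = i then x else 0) + (if j = k then y else 0))
      = if i = k then Ψ (x + y) else Ψ x * Ψ y := by
  by_cases h : i = k
  · subst h
    rw [if_pos rfl]
    have : ∀ j, Ψ ((if j = i then x else 0) + (if j = i then y else 0))
        = if j = i then Ψ (x + y) else 1 := by
      intro j; by_cases hj : j = i <;> simp [hj, h0]
    simp only [this]
    simp [Finset.prod_ite_eq']
  · rw [if_neg h]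
    have : ∀ j, Ψ ((if j = i then x else 0) + (if j = k then y else 0))
        = (if j = i then Ψ x else 1) * (if j = k then Ψ y else 1) := by
      intro j
      by_cases h1 : j = i <;> by_cases h2 : j = k
      · exact absurd (h1 ▸ h2) h
      all_goals simp [h1, h2, h0, h, Ne.symm h]
    simp only [this, Finset.prod_mul_distrib, Finset.prod_ite_eq', Finset.mem_univ, if_true]

lemma charFn_eq_Phi {Ω' : Type*} [MeasurableSpace Ω'] {P' : Measure Ω'} {x : Ω' → ℝ}
    (hx : Measurable x) (v : ℝ) :
    (∫ ω, Complex.exp (Complex.I * ((v * x ω : ℝ) : ℂ)) ∂P') = Phi (P'.map x) v := by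
  rw [Phi]
  simp only [Phi_integrand]
  have hg : AEStronglyMeasurable (fun y : ℝ => Complex.exp (Complex.I * ((v * y : ℝ) : ℂ)))
      (P'.map x) := (meas_exp_I_mul (measurable_const.mul measurable_id)).aestronglyMeasurable
  rw [integral_map hx.aemeasurable hg]

lemma cos_mul_cos (x y : ℝ) :
    Real.cos x * Real.cos y = (Real.cos (x + y) + Real.cos (x - y)) / 2 := by
  rw [Real.cos_add, Real.cos_sub]; ring

lemma integrable_cos {θ : Ω → ℝ} (hθ : Measurable θ) :
    Integrable (fun ω => Real.cos (θ ω)) P := by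
  refine (integrable_const (1:ℝ)).mono' (Real.measurable_cos.comp hθ).aestronglyMeasurable ?_
  exact Filter.Eventually.of_forall fun ω => by
    rw [Real.norm_eq_abs]; exact Real.abs_cos_le_one _

end Helpers

/-- if all the positions `ξ_1,…,ξ_M, ζ_1,…,ζ_N` are mutually independent
and identically distributed with a common even (symmetric) law, represented by the
independent pair `ξ0, ζ0` on `Ω'` (so `z = ξ0 + ζ0`), then for every `u ∈ ℝ`,
`Var[Re β(u)] = (1/(2MN))(1 + ψ_z(2u))
  + ψ_z(u)·[((N+M−2)/(2MN))·(1 + ψ_ξ(2u)) − ψ_z(u)·(N+M−1)/(MN)]`. -/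
theorem variance_re_array_pattern
    {Ω Ω' : Type*} [MeasurableSpace Ω] [MeasurableSpace Ω']
    {P : Measure Ω} [IsProbabilityMeasure P] {P' : Measure Ω'} [IsProbabilityMeasure P']
    {M N : ℕ} (hM : 0 < M) (hN : 0 < N)
    (ξ : Fin M → Ω → ℝ) (ζ : Fin N → Ω → ℝ)
    (hξm : ∀ m, Measurable (ξ m)) (hζm : ∀ n, Measurable (ζ n))
    (ξ0 ζ0 : Ω' → ℝ) (hξ0 : Measurable ξ0) (hζ0 : Measurable ζ0)
    (hindep : iIndepFun (Sum.elim ξ ζ) P)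
    (hξid : ∀ m, IdentDistrib (ξ m) ξ0 P P')
    (hζid : ∀ n, IdentDistrib (ζ n) ξ0 P P')
    (hζ0id : IdentDistrib ζ0 ξ0 P' P')
    (hind0 : IndepFun ξ0 ζ0 P')
    (heven : Measure.map (fun x : ℝ => -x) (Measure.map ξ0 P') = Measure.map ξ0 P')
    (u : ℝ) :
    ((variance (fun ω => (arrayPattern ξ ζ u ω).re) P : ℝ) : ℂ)
      = (1 / (2 * M * N) : ℂ) * (1 + charFn P' (fun ω' => ξ0 ω' + ζ0 ω') (2 * u))
        + charFn P' (fun ω' => ξ0 ω' + ζ0 ω') u *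
            ((((N : ℂ) + M - 2) / (2 * M * N)) * (1 + charFn P' ξ0 (2 * u))
              - charFn P' (fun ω' => ξ0 ω' + ζ0 ω') u * (((N : ℂ) + M - 1) / (M * N))) := by
  classical
  set μ : Measure ℝ := P'.map ξ0 with hμ
  haveI hPμ : IsProbabilityMeasure μ := Measure.isProbabilityMeasure_map hξ0.aemeasurable
  set V : (Fin M ⊕ Fin N) → Ω → ℝ := Sum.elim ξ ζ with hV
  have hVm : ∀ j, Measurable (V j) := by rintro (m|n); exacts [hξm m, hζm n]
  have hVmap : ∀ j, P.map (V j) = μ := by rintro (m|n); exacts [(hξid m).map_eq, (hζid n).map_eq]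
  set a : ℝ := (Phi μ u).re with ha
  set b : ℝ := (Phi μ (2*u)).re with hb
  have hA : Phi μ u = (a:ℂ) := Phi_real heven u
  have hB : Phi μ (2*u) = (b:ℂ) := Phi_real heven (2*u)
  have hgmeas : ∀ v : ℝ, Measurable fun x : ℝ => Complex.exp (Complex.I * ((v * x : ℝ) : ℂ)) :=
    fun v => meas_exp_I_mul (measurable_const.mul measurable_id)
  have hchar_xi : ∀ v, charFn P' ξ0 v = Phi μ v := fun v => charFn_eq_Phi hξ0 v
  have hchar_z : ∀ v, charFn P' (fun ω' => ξ0 ω' + ζ0 ω') v = Phi μ v * Phi μ v := by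
    intro v
    have h1 : ∀ ω', Complex.exp (Complex.I * ((v * (ξ0 ω' + ζ0 ω') : ℝ) : ℂ))
        = (fun x : ℝ => Complex.exp (Complex.I * ((v * x : ℝ) : ℂ))) (ξ0 ω') *
          (fun x : ℝ => Complex.exp (Complex.I * ((v * x : ℝ) : ℂ))) (ζ0 ω') := by
      intro ω'; rw [← Complex.exp_add]; congr 1; push_cast; ring
    rw [charFn]
    simp only [h1]
    rw [indep_integral_comp_mul hξ0 hζ0 hind0 (hgmeas v) (hgmeas v)]
    have h2 : (∫ ω', Complex.exp (Complex.I * ((v * ξ0 ω' : ℝ) : ℂ)) ∂P') = Phi μ v :=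
      charFn_eq_Phi hξ0 v
    have h3 : (∫ ω', Complex.exp (Complex.I * ((v * ζ0 ω' : ℝ) : ℂ)) ∂P') = Phi μ v := by
      rw [charFn_eq_Phi hζ0 v, hζ0id.map_eq]
    rw [h2, h3]
  -- coefficient functions
  set c : Fin M × Fin N → (Fin M ⊕ Fin N) → ℝ :=
    fun p j => (if j = Sum.inl p.1 then u else 0) + (if j = Sum.inr p.2 then u else 0) with hc
  have h1sum : ∀ (p : Fin M × Fin N) (ω : Ω),
      ∑ j, c p j * V j ω = u * (ζ p.2 ω + ξ p.1 ω) := by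
    intro p ω
    rw [Fintype.sum_sum_type]
    simp only [hc, hV, Sum.elim_inl, Sum.elim_inr, Sum.inl.injEq, Sum.inr.injEq,
      reduceCtorEq, if_false, add_zero, zero_add, ite_mul, zero_mul]
    rw [Finset.sum_ite_eq' Finset.univ p.1 (fun m' => u * ξ m' ω),
      Finset.sum_ite_eq' Finset.univ p.2 (fun n' => u * ζ n' ω)]
    simp
    ring
  have hsum : ∀ (s t : ℝ) (p q : Fin M × Fin N) (ω : Ω),
      ∑ j, (s * c p j + t * c q j) * V j ω
        = s * (u * (ζ p.2 ω + ξ p.1 ω)) + t * (u * (ζ q.2 ω + ξ q.1 ω)) := by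
    intro s t p q ω
    have : ∑ j, (s * c p j + t * c q j) * V j ω
        = s * ∑ j, c p j * V j ω + t * ∑ j, c q j * V j ω := by
      rw [Finset.mul_sum, Finset.mul_sum, ← Finset.sum_add_distrib]
      exact Finset.sum_congr rfl fun j _ => by ring
    rw [this, h1sum p ω, h1sum q ω]
  have hprod : ∀ (s t : ℝ) (p q : Fin M × Fin N),
      (∏ j, Phi μ (s * c p j + t * c q j))
        = (if p.1 = q.1 then Phi μ (s*u + t*u) else Phi μ (s*u) * Phi μ (t*u)) *
          (if p.2 = q.2 then Phi μ (s*u + t*u) else Phi μ (s*u) * Phi μ (t*u)) := by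
    intro s t p q
    rw [Fintype.prod_sum_type]
    have hl : ∀ m' : Fin M, s * c p (Sum.inl m') + t * c q (Sum.inl m')
        = (if m' = p.1 then s*u else 0) + (if m' = q.1 then t*u else 0) := by
      intro m'
      simp only [hc, Sum.inl.injEq, reduceCtorEq, if_false, add_zero]
      by_cases h1 : m' = p.1 <;> by_cases h2 : m' = q.1 <;> simp [h1, h2]
    have hr : ∀ n' : Fin N, s * c p (Sum.inr n') + t * c q (Sum.inr n')
        = (if n' = p.2 then s*u else 0) + (if n' = q.2 then t*u else 0) := by
      intro n'
      simp only [hc, Sum.inr.injEq, reduceCtorEq, if_false, zero_add]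
      by_cases h1 : n' = p.2 <;> by_cases h2 : n' = q.2 <;> simp [h1, h2]
    simp only [hl, hr]
    rw [prod_phi_two (Phi_zero μ) p.1 q.1 (s*u) (t*u),
      prod_phi_two (Phi_zero μ) p.2 q.2 (s*u) (t*u)]
  have hEcos : ∀ (s t : ℝ) (p q : Fin M × Fin N),
      ∫ ω, Real.cos (s * (u * (ζ p.2 ω + ξ p.1 ω)) + t * (u * (ζ q.2 ω + ξ q.1 ω))) ∂P
        = ((if p.1 = q.1 then Phi μ (s*u + t*u) else Phi μ (s*u) * Phi μ (t*u)) *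
           (if p.2 = q.2 then Phi μ (s*u + t*u) else Phi μ (s*u) * Phi μ (t*u))).re := by
    intro s t p q
    have h := cos_integral hVm hindep hVmap (fun j => s * c p j + t * c q j)
    simp only [hsum s t p q] at h
    rw [h, hprod s t p q]
  set C : Fin M × Fin N → Ω → ℝ := fun p ω => Real.cos (u * (ζ p.2 ω + ξ p.1 ω)) with hCdef
  have hCm : ∀ p, Measurable (C p) :=
    fun p => Real.measurable_cos.comp
      (measurable_const.mul ((hζm p.2).add (hξm p.1)))
  have hC1 : ∀ p, ∫ ω, C p ω ∂P = a * a := by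
    intro p
    have h := hEcos 1 0 p p
    simp only [one_mul, zero_mul, add_zero, if_pos rfl] at h
    rw [hCdef]
    simp only []
    rw [h, hA]
    norm_num [← Complex.ofReal_mul]
  have hK : ∀ p q : Fin M × Fin N, ∫ ω, C p ω * C q ω ∂P
      = ((if p.1 = q.1 then b else a*a) * (if p.2 = q.2 then b else a*a)
        + (if p.1 = q.1 then 1 else a*a) * (if p.2 = q.2 then 1 else a*a)) / 2 := by
    intro p q
    have hptw : ∀ ω, C p ω * C q ω
        = (Real.cos (1 * (u * (ζ p.2 ω + ξ p.1 ω)) + 1 * (u * (ζ q.2 ω + ξ q.1 ω)))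
          + Real.cos (1 * (u * (ζ p.2 ω + ξ p.1 ω)) + (-1) * (u * (ζ q.2 ω + ξ q.1 ω)))) / 2 := by
      intro ω
      rw [hCdef]
      simp only []
      rw [cos_mul_cos]
      ring_nf
    simp only [hptw]
    have hint1 : Integrable (fun ω => Real.cos
        (1 * (u * (ζ p.2 ω + ξ p.1 ω)) + 1 * (u * (ζ q.2 ω + ξ q.1 ω)))) P :=
      integrable_cos (((measurable_const.mul ((hζm p.2).add (hξm p.1))).const_mul 1).add
        ((measurable_const.mul ((hζm q.2).add (hξm q.1))).const_mul 1))
    have hint2 : Integrable (fun ω => Real.cos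
        (1 * (u * (ζ p.2 ω + ξ p.1 ω)) + (-1) * (u * (ζ q.2 ω + ξ q.1 ω)))) P :=
      integrable_cos (((measurable_const.mul ((hζm p.2).add (hξm p.1))).const_mul 1).add
        ((measurable_const.mul ((hζm q.2).add (hξm q.1))).const_mul (-1)))
    rw [integral_div, integral_add hint1 hint2, hEcos 1 1 p q, hEcos 1 (-1) p q]
    have e1 : (1:ℝ)*u + 1*u = 2*u := by ring
    have e2 : (1:ℝ)*u + (-1)*u = 0 := by ring
    have e3 : (1:ℝ)*u = u := by ring
    have e4 : (-1:ℝ)*u = -u := by ring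
    rw [e1, e2, e3, e4, Phi_neg heven, Phi_zero, hA, hB]
    by_cases h1 : p.1 = q.1 <;> by_cases h2 : p.2 = q.2 <;>
      simp [h1, h2, ← Complex.ofReal_mul] <;> ring
  -- representation of Re β
  have hXrep : (fun ω => (arrayPattern ξ ζ u ω).re)
      = fun ω => (1/(M*N:ℝ)) * ∑ p : Fin M × Fin N, C p ω := by
    funext ω
    rw [arrayPattern]
    have hcoef : ((1:ℂ) / (M*N)) = (((1/(M*N):ℝ)) : ℂ) := by push_cast; ring
    rw [hcoef, Complex.re_ofReal_mul]
    congr 1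
    rw [Fintype.sum_prod_type, Complex.re_sum]
    refine Finset.sum_congr rfl fun m _ => ?_
    rw [Complex.re_sum]
    refine Finset.sum_congr rfl fun n _ => ?_
    rw [mul_comm Complex.I]
    exact Complex.exp_ofReal_mul_I_re _
  have hCint : ∀ p, Integrable (C p) P :=
    fun p => integrable_cos (measurable_const.mul ((hζm p.2).add (hξm p.1)))
  have hCCint : ∀ p q, Integrable (fun ω => C p ω * C q ω) P := by
    intro p q
    refine (integrable_const (1:ℝ)).mono' ((hCm p).mul (hCm q)).aestronglyMeasurable ?_
    refine Filter.Eventually.of_forall fun ω => ?_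
    rw [Real.norm_eq_abs, abs_mul]
    exact mul_le_one₀ (Real.abs_cos_le_one _) (abs_nonneg _) (Real.abs_cos_le_one _)
  have hMN0 : (0:ℝ) < (M:ℝ) * (N:ℝ) := by
    have : (0:ℝ) < (M:ℝ) := by exact_mod_cast hM
    have h2 : (0:ℝ) < (N:ℝ) := by exact_mod_cast hN
    positivity
  have hmem : MeasureTheory.MemLp (fun ω => (arrayPattern ξ ζ u ω).re) 2 P := by
    rw [hXrep]
    refine (memLp_top_of_bound ?_ 1 (Filter.Eventually.of_forall fun ω => ?_)).mono_exponent
      le_top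
    · exact ((Finset.measurable_sum _ fun p _ => hCm p).const_mul _).aestronglyMeasurable
    · rw [Real.norm_eq_abs, abs_mul]
      have h1 : |∑ p : Fin M × Fin N, C p ω| ≤ ((M:ℝ) * N) := by
        refine (Finset.abs_sum_le_sum_abs _ _).trans ?_
        refine (Finset.sum_le_sum fun p _ => Real.abs_cos_le_one _).trans ?_
        simp [Finset.card_univ]
      calc |1/((M:ℝ)*N)| * |∑ p : Fin M × Fin N, C p ω|
          ≤ (1/((M:ℝ)*N)) * ((M:ℝ)*N) := by
            rw [_root_.abs_of_nonneg (by positivity : (0:ℝ) ≤ 1/((M:ℝ)*N))]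
            exact mul_le_mul_of_nonneg_left h1 (by positivity)
        _ = 1 := by field_simp
  have hEX : ∫ ω, (1/((M:ℝ)*N)) * ∑ p : Fin M × Fin N, C p ω ∂P = a * a := by
    rw [integral_const_mul, integral_finset_sum _ fun p _ => hCint p]
    simp only [hC1]
    rw [Finset.sum_const]
    simp [Finset.card_univ]
    field_simp
  have hEX2 : ∫ ω, ((1/((M:ℝ)*N)) * ∑ p : Fin M × Fin N, C p ω)^2 ∂P
      = (1/((M:ℝ)*N))^2 *
          ∑ p : Fin M × Fin N, ∑ q : Fin M × Fin N, ∫ ω, C p ω * C q ω ∂P := by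
    have hptw : ∀ ω, ((1/((M:ℝ)*N)) * ∑ p : Fin M × Fin N, C p ω)^2
        = (1/((M:ℝ)*N))^2 * ∑ p : Fin M × Fin N, ∑ q : Fin M × Fin N, C p ω * C q ω := by
      intro ω
      rw [mul_pow]
      congr 1
      rw [sq, Finset.sum_mul_sum]
    simp only [hptw]
    rw [integral_const_mul,
      integral_finset_sum _ (fun p _ => integrable_finset_sum _ fun q _ => hCCint p q)]
    congr 1
    refine Finset.sum_congr rfl fun p _ => ?_
    rw [integral_finset_sum _ fun q _ => hCCint p q]
  set e0 : ℝ := a*a*(a*a) with he0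
  set e1 : ℝ := (b*(a*a) + a*a)/2 - e0 with he1
  set e2 : ℝ := (b*b+1)/2 - (b*(a*a) + a*a) + e0 with he2
  have hdec : ∀ p q : Fin M × Fin N,
      (((if p.1 = q.1 then b else a*a) * (if p.2 = q.2 then b else a*a))
        + (if p.1 = q.1 then 1 else a*a) * (if p.2 = q.2 then 1 else a*a)) / 2
      = e0 + (if p.1 = q.1 then e1 else 0) + (if p.2 = q.2 then e1 else 0)
          + (if p.1 = q.1 then (if p.2 = q.2 then e2 else 0) else 0) := by
    intro p q
    by_cases h1 : p.1 = q.1 <;> by_cases h2 : p.2 = q.2 <;>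
      simp [h1, h2, he0, he1, he2] <;> ring
  have t1 : ∀ p : Fin M × Fin N,
      ∑ q : Fin M × Fin N, (if p.1 = q.1 then e1 else 0) = (N:ℝ)*e1 := by
    intro p
    rw [Fintype.sum_prod_type]
    have hx : ∀ x : Fin M, ∑ _x1 : Fin N, (if p.1 = x then e1 else 0)
        = (N:ℝ) * (if p.1 = x then e1 else 0) := by
      intro x
      rw [Finset.sum_const, Finset.card_univ, Fintype.card_fin, nsmul_eq_mul]
    simp only [hx]
    rw [← Finset.mul_sum, Finset.sum_ite_eq]
    simp
  have t2 : ∀ p : Fin M × Fin N,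
      ∑ q : Fin M × Fin N, (if p.2 = q.2 then e1 else 0) = (M:ℝ)*e1 := by
    intro p
    rw [Fintype.sum_prod_type]
    have hx : (∑ x1 : Fin N, if p.2 = x1 then e1 else 0) = e1 := by
      rw [Finset.sum_ite_eq]
      simp
    simp only [hx]
    rw [Finset.sum_const, Finset.card_univ, Fintype.card_fin, nsmul_eq_mul]
  have t3 : ∀ p : Fin M × Fin N,
      ∑ q : Fin M × Fin N,
        (if p.1 = q.1 then (if p.2 = q.2 then e2 else 0) else 0) = e2 := by
    intro p
    have hq : ∀ q : Fin M × Fin N,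
        (if p.1 = q.1 then (if p.2 = q.2 then e2 else 0) else 0)
          = if p = q then e2 else 0 := by
      intro q
      by_cases h1 : p.1 = q.1 <;> by_cases h2 : p.2 = q.2 <;>
        simp [Prod.ext_iff, h1, h2]
    simp only [hq]
    simp [Finset.sum_ite_eq]
  have hS : ∑ p : Fin M × Fin N, ∑ q : Fin M × Fin N, ∫ ω, C p ω * C q ω ∂P
      = ((M:ℝ)*N) * (((M:ℝ)*N)*e0 + (N:ℝ)*e1 + (M:ℝ)*e1 + e2) := by
    simp only [hK, hdec]
    have hinner : ∀ p : Fin M × Fin N,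
        ∑ q : Fin M × Fin N,
          (e0 + (if p.1 = q.1 then e1 else 0) + (if p.2 = q.2 then e1 else 0)
            + (if p.1 = q.1 then (if p.2 = q.2 then e2 else 0) else 0))
        = ((M:ℝ)*N)*e0 + (N:ℝ)*e1 + (M:ℝ)*e1 + e2 := by
      intro p
      rw [Finset.sum_add_distrib, Finset.sum_add_distrib, Finset.sum_add_distrib,
        t1 p, t2 p, t3 p, Finset.sum_const, Finset.card_univ, Fintype.card_prod,
        Fintype.card_fin, Fintype.card_fin, nsmul_eq_mul]
      push_cast
      ring
    simp only [hinner]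
    rw [Finset.sum_const, Finset.card_univ, Fintype.card_prod, Fintype.card_fin,
      Fintype.card_fin, nsmul_eq_mul]
    push_cast
    ring
  have hvar : variance (fun ω => (arrayPattern ξ ζ u ω).re) P
      = (1/((M:ℝ)*N))^2 * (((M:ℝ)*N) * (((M:ℝ)*N)*e0 + (N:ℝ)*e1 + (M:ℝ)*e1 + e2))
        - (a*a)^2 := by
    rw [variance_eq_sub hmem, hXrep]
    have hx2 : ((fun ω => (1/((M:ℝ)*N)) * ∑ p : Fin M × Fin N, C p ω)^(2:ℕ))
        = fun ω => ((1/((M:ℝ)*N)) * ∑ p : Fin M × Fin N, C p ω)^(2:ℕ) := rfl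
    rw [hx2]
    show (∫ ω, ((1/((M:ℝ)*N)) * ∑ p : Fin M × Fin N, C p ω)^2 ∂P)
        - (∫ ω, (1/((M:ℝ)*N)) * ∑ p : Fin M × Fin N, C p ω ∂P)^2 = _
    rw [hEX2, hEX, hS]
  have hMR : (M:ℝ) ≠ 0 := Nat.cast_ne_zero.mpr hM.ne'
  have hNR : (N:ℝ) ≠ 0 := Nat.cast_ne_zero.mpr hN.ne'
  have hreal : (1/((M:ℝ)*N))^2 * (((M:ℝ)*N) * (((M:ℝ)*N)*e0 + (N:ℝ)*e1 + (M:ℝ)*e1 + e2))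
        - (a*a)^2
      = (1/(2*(M:ℝ)*N)) * (1 + b*b)
        + (a*a) * (((N:ℝ)+M-2)/(2*(M:ℝ)*N) * (1+b) - (a*a)*(((N:ℝ)+M-1)/((M:ℝ)*N))) := by
    simp only [he2, he1, he0]
    field_simp
    ring
  rw [hvar, hreal, hchar_z (2*u), hchar_z u, hchar_xi (2*u), hA, hB]
  push_cast
  ring
end

section
/- Let ξ_1,…,ξ_M and ζ_1,…,ζ_N be mutually independent real random variables, all identically distributed with a common even probability density p, and let η(u) = E[β(u)] denote the mean array pattern (which is real-valued since p is even). Then for every u ∈ ℝ, the real and imaginary parts of the array pattern are uncorrelated: E[(Re β(u) − η(u)) · Im β(u)] = 0. -/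
open MeasureTheory ProbabilityTheory

/-- The array pattern as a function of the vector of positions. -/
noncomputable def Bfun (M N : ℕ) (u : ℝ) (x : Fin M ⊕ Fin N → ℝ) : ℂ :=
  (1 / (M * N) : ℂ) * ∑ m : Fin M, ∑ n : Fin N,
    Complex.exp (Complex.I * ((u * (x (Sum.inr n) + x (Sum.inl m)) : ℝ) : ℂ))

lemma Bfun_continuous (M N : ℕ) (u : ℝ) : Continuous (Bfun M N u) := by
  unfold Bfun
  fun_prop

lemma Bfun_neg (M N : ℕ) (u : ℝ) (x : Fin M ⊕ Fin N → ℝ) :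
    Bfun M N u (-x) = starRingEnd ℂ (Bfun M N u x) := by
  unfold Bfun
  rw [map_mul, map_sum]
  congr 1
  · simp
  refine Finset.sum_congr rfl fun m _ => ?_
  rw [map_sum]
  refine Finset.sum_congr rfl fun n _ => ?_
  rw [← Complex.exp_conj, map_mul, Complex.conj_I, Complex.conj_ofReal]
  congr 1
  simp only [Pi.neg_apply]
  push_cast
  ring

/-- if all the positions `ξ_1,…,ξ_M, ζ_1,…,ζ_N` are mutually independent
and identically distributed with a common even (symmetric) law, then for every `u ∈ ℝ`
the real and imaginary parts of the array pattern are uncorrelated: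
`E[(Re β(u) − η(u)) · Im β(u)] = 0`, where `η(u) = E[β(u)]` is the (real-valued)
mean array pattern. -/
theorem re_im_array_pattern_uncorrelated
    {Ω : Type*} [MeasurableSpace Ω]
    {P : Measure Ω} [IsProbabilityMeasure P]
    {M N : ℕ} (hM : 0 < M) (hN : 0 < N)
    (ξ : Fin M → Ω → ℝ) (ζ : Fin N → Ω → ℝ)
    (hξm : ∀ m, Measurable (ξ m)) (hζm : ∀ n, Measurable (ζ n))
    (hindep : iIndepFun (Sum.elim ξ ζ) P)
    (hid : ∀ m n, IdentDistrib (ξ m) (Sum.elim ξ ζ n) P P)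
    (heven : Measure.map (fun x : ℝ => -x) (Measure.map (ξ ⟨0, hM⟩) P)
      = Measure.map (ξ ⟨0, hM⟩) P)
    (u : ℝ) :
    ∫ ω, ((arrayPattern ξ ζ u ω).re - (∫ ω', arrayPattern ξ ζ u ω' ∂P).re)
        * (arrayPattern ξ ζ u ω).im ∂P = 0 := by
  classical
  set W := Sum.elim ξ ζ with hW
  have hWm : ∀ i, Measurable (W i) := by
    rintro (m | n)
    · exact hξm m
    · exact hζm n
  set X : Ω → (Fin M ⊕ Fin N → ℝ) := fun ω i => W i ω with hX
  have hXm : Measurable X := measurable_pi_lambda _ hWm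
  set μ₀ := Measure.map (ξ ⟨0, hM⟩) P with hμ₀
  haveI hprob : IsProbabilityMeasure μ₀ := Measure.isProbabilityMeasure_map (hξm _).aemeasurable
  set ν : Measure (Fin M ⊕ Fin N → ℝ) := Measure.pi (fun _ => μ₀) with hν
  have hmarg : ∀ i, Measure.map (W i) P = μ₀ := fun i => ((hid ⟨0, hM⟩ i).map_eq).symm
  have hmap : Measure.map X P = ν := by
    rw [hν]
    refine (Measure.pi_eq fun s hs => ?_).symm
    rw [Measure.map_apply hXm (MeasurableSet.univ_pi hs)]
    have hpre : X ⁻¹' Set.pi Set.univ s = ⋂ i ∈ Finset.univ, W i ⁻¹' s i := by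
      ext ω; simp [hX, Set.mem_pi]
    rw [hpre, hindep.measure_inter_preimage_eq_mul Finset.univ (fun i _ => hs i)]
    refine Finset.prod_congr rfl fun i _ => ?_
    rw [← Measure.map_apply (hWm i) (hs i), hmarg i]
  have hneg : Measure.map (fun x : Fin M ⊕ Fin N → ℝ => -x) ν = ν := by
    conv_rhs => rw [hν]
    refine (Measure.pi_eq fun s hs => ?_).symm
    rw [Measure.map_apply measurable_neg (MeasurableSet.univ_pi hs)]
    have hpre : (fun x : Fin M ⊕ Fin N → ℝ => -x) ⁻¹' Set.pi Set.univ s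
        = Set.pi Set.univ (fun i => (fun t : ℝ => -t) ⁻¹' s i) := by
      ext x; simp [Set.mem_pi]
    rw [hpre, hν, Measure.pi_pi]
    refine Finset.prod_congr rfl fun i _ => ?_
    rw [← Measure.map_apply measurable_neg (hs i), heven]
  set c := (∫ ω', arrayPattern ξ ζ u ω' ∂P).re with hc
  set g : (Fin M ⊕ Fin N → ℝ) → ℝ :=
    fun x => ((Bfun M N u x).re - c) * (Bfun M N u x).im with hg
  have hgc : Continuous g :=
    ((Complex.continuous_re.comp (Bfun_continuous M N u)).sub continuous_const).mul
      (Complex.continuous_im.comp (Bfun_continuous M N u))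
  have hgneg : ∀ x, g (-x) = -g x := by
    intro x
    simp only [hg, Bfun_neg, Complex.conj_re, Complex.conj_im]
    ring
  have hAP : ∀ ω, arrayPattern ξ ζ u ω = Bfun M N u (X ω) := fun ω => rfl
  have key : ∫ ω, g (X ω) ∂P = ∫ x, g x ∂ν := by
    rw [← hmap, integral_map hXm.aemeasurable hgc.aestronglyMeasurable]
  have key2 : ∫ x, g x ∂ν = ∫ x, g (-x) ∂ν := by
    conv_lhs => rw [← hneg]
    rw [integral_map measurable_neg.aemeasurable hgc.aestronglyMeasurable]
  have key3 : ∫ x, g (-x) ∂ν = -∫ x, g x ∂ν := by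
    simp only [hgneg]
    exact integral_neg g
  have hzero : ∫ x, g x ∂ν = 0 := by
    have := key2.trans key3
    linarith
  calc ∫ ω, ((arrayPattern ξ ζ u ω).re - (∫ ω', arrayPattern ξ ζ u ω' ∂P).re)
        * (arrayPattern ξ ζ u ω).im ∂P
      = ∫ ω, g (X ω) ∂P := by
        refine integral_congr_ae (Filter.Eventually.of_forall fun ω => ?_)
        simp [hg, hAP ω, hc]
    _ = 0 := key.trans hzero
end

section
/- Let X and Y be independent Rayleigh random variables with scale parameters σ_1 > 0 and σ_2 > 0 respectively. Then for every q > 0, the complementary cumulative distribution function of the product satisfies P(XY > q) = x · K_1(x), where x = q/(σ_1 σ_2) and K_1(x) = ∫_0^∞ exp(−x cosh t) cosh t dt is the modified Bessel function of the second kind of order 1 (expressed via its integral representation). -/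
open MeasureTheory ProbabilityTheory Set Real Filter Topology

/-- The law of a Rayleigh random variable with scale `σ > 0`: the measure on `ℝ` with
density `f(t) = (t/σ²) exp(−t²/(2σ²))` for `t ≥ 0` (and `0` for `t < 0`). -/
noncomputable def rayleighLaw (σ : ℝ) : Measure ℝ :=
  MeasureTheory.volume.withDensity fun t =>
    ENNReal.ofReal (if 0 ≤ t then t / σ ^ 2 * Real.exp (-t ^ 2 / (2 * σ ^ 2)) else 0)

namespace RayleighAux

lemma deriv_aux (σ : ℝ) (hσ : 0 < σ) (t : ℝ) :
    HasDerivAt (fun t => -Real.exp (-t ^ 2 / (2 * σ ^ 2)))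
      (t / σ ^ 2 * Real.exp (-t ^ 2 / (2 * σ ^ 2))) t := by
  have h1 : HasDerivAt (fun t : ℝ => -t ^ 2 / (2 * σ ^ 2)) (-(2 * t) / (2 * σ ^ 2)) t := by
    have := ((hasDerivAt_pow 2 t).neg).div_const (2 * σ ^ 2)
    simpa [neg_div] using this
  have h2 := ((Real.hasDerivAt_exp (-t ^ 2 / (2 * σ ^ 2))).comp t h1).neg
  refine h2.congr_deriv ?_
  have : (σ:ℝ) ^ 2 ≠ 0 := by positivity
  ring

lemma tendsto_aux (σ : ℝ) (hσ : 0 < σ) :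
    Tendsto (fun t => -Real.exp (-t ^ 2 / (2 * σ ^ 2))) atTop (𝓝 0) := by
  have h : Tendsto (fun t : ℝ => -t ^ 2 / (2 * σ ^ 2)) atTop atBot := by
    have h1 : Tendsto (fun t : ℝ => t ^ 2) atTop atTop := tendsto_pow_atTop two_ne_zero
    have h2 := h1.atTop_div_const (by positivity : (0:ℝ) < 2 * σ ^ 2)
    have := tendsto_neg_atTop_atBot.comp h2
    simpa [Function.comp_def, neg_div] using this
  have := (Real.tendsto_exp_atBot.comp h).neg
  simpa [Function.comp_def] using this

lemma integrableOn_density (σ : ℝ) (hσ : 0 < σ) {a : ℝ} (ha : 0 ≤ a) :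
    IntegrableOn (fun t => t / σ ^ 2 * Real.exp (-t ^ 2 / (2 * σ ^ 2))) (Ioi a) := by
  refine integrableOn_Ioi_deriv_of_nonneg' (fun t _ => deriv_aux σ hσ t)
    (fun t ht => ?_) (tendsto_aux σ hσ)
  exact mul_nonneg (div_nonneg (ha.trans ht.le) (by positivity)) (Real.exp_pos _).le

lemma integral_density (σ : ℝ) (hσ : 0 < σ) {a : ℝ} (ha : 0 ≤ a) :
    ∫ t in Ioi a, t / σ ^ 2 * Real.exp (-t ^ 2 / (2 * σ ^ 2))
      = Real.exp (-a ^ 2 / (2 * σ ^ 2)) := by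
  have := integral_Ioi_of_hasDerivAt_of_nonneg' (fun t _ => deriv_aux σ hσ t)
    (fun t ht => mul_nonneg (div_nonneg (ha.trans ht.le) (by positivity)) (Real.exp_pos _).le)
    (tendsto_aux σ hσ)
  simpa using this

lemma rayleigh_tail (σ : ℝ) (hσ : 0 < σ) {a : ℝ} (ha : 0 ≤ a) :
    rayleighLaw σ (Ioi a) = ENNReal.ofReal (Real.exp (-a ^ 2 / (2 * σ ^ 2))) := by
  rw [rayleighLaw, withDensity_apply _ measurableSet_Ioi]
  rw [setLIntegral_congr_fun measurableSet_Ioi (fun t ht =>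
    by rw [if_pos (ha.trans (le_of_lt ht))] :
    ∀ t, t ∈ Ioi a →
      ENNReal.ofReal (if 0 ≤ t then t / σ ^ 2 * Real.exp (-t ^ 2 / (2 * σ ^ 2)) else 0)
        = ENNReal.ofReal (t / σ ^ 2 * Real.exp (-t ^ 2 / (2 * σ ^ 2))))]
  rw [← ofReal_integral_eq_lintegral_ofReal (integrableOn_density σ hσ ha)
    ((ae_restrict_iff' measurableSet_Ioi).mpr (ae_of_all _ fun t ht =>
      mul_nonneg (div_nonneg (ha.trans ht.le) (by positivity)) (Real.exp_pos _).le))]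
  rw [integral_density σ hσ ha]

lemma rayleigh_Iio (σ : ℝ) : rayleighLaw σ (Iio 0) = 0 := by
  rw [rayleighLaw, withDensity_apply _ measurableSet_Iio]
  rw [setLIntegral_congr_fun measurableSet_Iio (fun t ht => by
    simp [not_le.mpr (mem_Iio.mp ht)] :
    ∀ t, t ∈ Iio 0 →
      ENNReal.ofReal (if 0 ≤ t then t / σ ^ 2 * Real.exp (-t ^ 2 / (2 * σ ^ 2)) else 0) = 0)]
  simp

lemma hmeas_aux (σ₁ σ₂ q : ℝ) :
    Measurable (fun s => s / σ₁ ^ 2 * Real.exp (-s ^ 2 / (2 * σ₁ ^ 2))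
      * Real.exp (-(q / s) ^ 2 / (2 * σ₂ ^ 2))) := by
  apply Measurable.mul
  · apply Measurable.mul
    · exact (measurable_id.div_const _)
    · exact (Real.measurable_exp.comp ((measurable_id.pow_const 2).neg.div_const _))
  · exact Real.measurable_exp.comp
      (((measurable_const.div measurable_id).pow_const 2).neg.div_const _)

lemma hint_aux (σ₁ σ₂ q : ℝ) (hσ₁ : 0 < σ₁) (hσ₂ : 0 < σ₂) (hq : 0 < q) :
    IntegrableOn (fun s => s / σ₁ ^ 2 * Real.exp (-s ^ 2 / (2 * σ₁ ^ 2))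
      * Real.exp (-(q / s) ^ 2 / (2 * σ₂ ^ 2))) (Ioi 0) := by
  refine Integrable.mono (integrableOn_density σ₁ hσ₁ le_rfl)
    (hmeas_aux σ₁ σ₂ q).aestronglyMeasurable ?_
  refine (ae_restrict_iff' measurableSet_Ioi).mpr (ae_of_all _ fun s hs => ?_)
  have hs0 : (0:ℝ) < s := hs
  have hd : 0 ≤ s / σ₁ ^ 2 * Real.exp (-s ^ 2 / (2 * σ₁ ^ 2)) :=
    mul_nonneg (by positivity) (Real.exp_pos _).le
  rw [Real.norm_eq_abs, Real.norm_eq_abs, abs_of_nonneg (mul_nonneg hd (Real.exp_pos _).le),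
    abs_of_nonneg hd]
  refine mul_le_of_le_one_right hd (Real.exp_le_one_iff.mpr ?_)
  exact div_nonpos_of_nonpos_of_nonneg (neg_nonpos.mpr (sq_nonneg _)) (by positivity)

lemma key (σ₁ σ₂ q : ℝ) (hσ₁ : 0 < σ₁) (hσ₂ : 0 < σ₂) (hq : 0 < q) :
    ∫ s in Ioi (0:ℝ), s / σ₁ ^ 2 * Real.exp (-s ^ 2 / (2 * σ₁ ^ 2))
        * Real.exp (-(q / s) ^ 2 / (2 * σ₂ ^ 2))
      = (q / (σ₁ * σ₂)) * ∫ t in Ioi (0:ℝ),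
          Real.exp (-(q / (σ₁ * σ₂)) * Real.cosh t) * Real.cosh t := by
  set x : ℝ := q / (σ₁ * σ₂) with hxdef
  have hx : 0 < x := by positivity
  set c : ℝ := σ₁ * Real.sqrt x with hcdef
  have hc : 0 < c := by positivity
  have hc2 : c ^ 2 = σ₁ ^ 2 * x := by
    rw [hcdef, mul_pow, Real.sq_sqrt hx.le]
  set h : ℝ → ℝ := fun s => s / σ₁ ^ 2 * Real.exp (-s ^ 2 / (2 * σ₁ ^ 2))
      * Real.exp (-(q / s) ^ 2 / (2 * σ₂ ^ 2)) with hhdef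
  set φ : ℝ → ℝ := fun u => c * Real.exp (u / 2) with hφdef
  have hφderiv : ∀ u : ℝ, HasDerivAt φ (c * Real.exp (u / 2) * (1 / 2)) u := by
    intro u
    have h1 : HasDerivAt (fun u : ℝ => u / 2) (1 / 2) u := (hasDerivAt_id u).div_const 2
    have h2 := (Real.hasDerivAt_exp (u / 2)).comp u h1
    have := h2.const_mul c
    refine this.congr_deriv ?_
    ring
  have himg : φ '' univ = Ioi 0 := by
    ext y
    simp only [image_univ, mem_range, mem_Ioi]
    constructor
    · rintro ⟨u, rfl⟩; positivity
    · intro hy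
      refine ⟨2 * Real.log (y / c), ?_⟩
      have h2 : 2 * Real.log (y / c) / 2 = Real.log (y / c) := by ring
      rw [hφdef]
      simp only []
      rw [h2, Real.exp_log (by positivity)]
      field_simp
  have hinj : InjOn φ univ := by
    intro a _ b _ hab
    have h1 : Real.exp (a / 2) = Real.exp (b / 2) := mul_left_cancel₀ hc.ne' hab
    have := Real.exp_injective h1
    linarith
  -- pointwise identity
  have hpt : ∀ u : ℝ, |c * Real.exp (u / 2) * (1 / 2)| • h (φ u)
      = x / 2 * (Real.exp u * Real.exp (-x * Real.cosh u)) := by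
    intro u
    have hE : Real.exp (u / 2) ^ 2 = Real.exp u := by
      rw [sq, ← Real.exp_add]; norm_num
    have hq2 : q ^ 2 = x ^ 2 * σ₁ ^ 2 * σ₂ ^ 2 := by
      rw [hxdef]; field_simp
    have e1 : -(c * Real.exp (u / 2)) ^ 2 / (2 * σ₁ ^ 2) = -x * Real.exp u / 2 := by
      rw [mul_pow, hc2, hE]
      field_simp
    have e2 : -(q / (c * Real.exp (u / 2))) ^ 2 / (2 * σ₂ ^ 2) = -x * Real.exp (-u) / 2 := by
      rw [div_pow, mul_pow, hc2, hE, Real.exp_neg]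
      rw [hq2]
      have h1 : Real.exp u ≠ 0 := (Real.exp_pos u).ne'
      field_simp
    have e3 : -x * Real.cosh u = -x * Real.exp u / 2 + -x * Real.exp (-u) / 2 := by
      rw [Real.cosh_eq]; ring
    rw [smul_eq_mul, abs_of_pos (by positivity), hhdef]
    simp only [hφdef]
    rw [e1, e2, e3, Real.exp_add]
    have hkey : c ^ 2 * Real.exp (u / 2) ^ 2 = σ₁ ^ 2 * (x * Real.exp u) := by
      rw [hc2, hE]; ring
    have hσ₁2 : (σ₁:ℝ) ^ 2 ≠ 0 := by positivity
    have hEq : c * Real.exp (u / 2) / σ₁ ^ 2 * (c * Real.exp (u / 2) * (1 / 2))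
        = x / 2 * Real.exp u := by
      have h1 : c * Real.exp (u / 2) / σ₁ ^ 2 * (c * Real.exp (u / 2) * (1 / 2))
          = c ^ 2 * Real.exp (u / 2) ^ 2 / σ₁ ^ 2 * (1 / 2) := by ring
      rw [h1, hkey]
      field_simp
    linear_combination (Real.exp (-x * Real.exp u / 2) * Real.exp (-x * Real.exp (-u) / 2)) * hEq
  have hint_h : IntegrableOn h (Ioi 0) := hint_aux σ₁ σ₂ q hσ₁ hσ₂ hq
  set g : ℝ → ℝ := fun u => Real.exp u * Real.exp (-x * Real.cosh u) with hgdef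
  -- change of variables
  have hcv : ∫ s in Ioi (0:ℝ), h s = ∫ u, x / 2 * g u := by
    rw [← himg, integral_image_eq_integral_abs_deriv_smul MeasurableSet.univ
      (fun u _ => (hφderiv u).hasDerivWithinAt) hinj h]
    rw [Measure.restrict_univ]
    exact integral_congr_ae (ae_of_all _ hpt)
  have hf_int : Integrable g := by
    have h1 : IntegrableOn (fun u => |c * Real.exp (u / 2) * (1 / 2)| • h (φ u)) univ := by
      rw [← integrableOn_image_iff_integrableOn_abs_deriv_smul MeasurableSet.univ
        (fun u _ => (hφderiv u).hasDerivWithinAt) hinj h]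
      rw [himg]; exact hint_h
    rw [integrableOn_univ] at h1
    have h2 : Integrable (fun u => x / 2 * g u) := h1.congr (ae_of_all _ hpt)
    have h3 : (fun u => (2 / x) * (x / 2 * g u)) = g := by
      funext u; field_simp
    rw [← h3]
    exact h2.const_mul _
  have hsplit : ∫ u, g u = (∫ u in Iic (0:ℝ), g u) + ∫ u in Ioi (0:ℝ), g u := by
    have h0 := integral_add_compl (measurableSet_Iic (a := (0:ℝ))) hf_int
    rw [compl_Iic] at h0
    exact h0.symm
  have hneg : ∫ u in Iic (0:ℝ), g u
      = ∫ u in Ioi (0:ℝ), Real.exp (-u) * Real.exp (-x * Real.cosh u) := by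
    have h0 := integral_comp_neg_Ioi (0:ℝ) g
    simp only [neg_zero] at h0
    rw [← h0]
    refine setIntegral_congr_fun measurableSet_Ioi fun u hu => ?_
    simp [hgdef, Real.cosh_neg]
  have hg_Ioi : IntegrableOn g (Ioi 0) := hf_int.integrableOn
  have hgneg_Ioi :
      IntegrableOn (fun u => Real.exp (-u) * Real.exp (-x * Real.cosh u)) (Ioi 0) := by
    refine Integrable.mono hg_Ioi
      ((Real.measurable_exp.comp measurable_neg).mul
        (Real.measurable_exp.comp ((measurable_const.mul Real.measurable_cosh)))).aestronglyMeasurable ?_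
    refine (ae_restrict_iff' measurableSet_Ioi).mpr (ae_of_all _ fun u hu => ?_)
    have hu0 : (0:ℝ) < u := hu
    rw [Real.norm_eq_abs, Real.norm_eq_abs, abs_of_nonneg (by positivity),
      abs_of_nonneg (by positivity)]
    have : Real.exp (-u) ≤ Real.exp u := Real.exp_le_exp.mpr (by linarith)
    exact mul_le_mul_of_nonneg_right this (Real.exp_pos _).le
  have hsum : (∫ u in Ioi (0:ℝ), Real.exp (-u) * Real.exp (-x * Real.cosh u))
        + ∫ u in Ioi (0:ℝ), g u
      = ∫ u in Ioi (0:ℝ), 2 * (Real.exp (-x * Real.cosh u) * Real.cosh u) := by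
    rw [← integral_add hgneg_Ioi hg_Ioi]
    refine setIntegral_congr_fun measurableSet_Ioi fun u hu => ?_
    simp only [hgdef]
    rw [Real.cosh_eq]
    ring
  calc ∫ s in Ioi (0:ℝ), h s = ∫ u, x / 2 * g u := hcv
    _ = x / 2 * ∫ u, g u := integral_const_mul _ _
    _ = x / 2 * (∫ u in Ioi (0:ℝ), 2 * (Real.exp (-x * Real.cosh u) * Real.cosh u)) := by
        rw [hsplit, hneg, hsum]
    _ = x / 2 * (2 * ∫ u in Ioi (0:ℝ), Real.exp (-x * Real.cosh u) * Real.cosh u) := by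
        rw [integral_const_mul]
    _ = x * ∫ t in Ioi (0:ℝ), Real.exp (-x * Real.cosh t) * Real.cosh t := by ring

end RayleighAux

open RayleighAux

/-- if `X` and `Y` are independent Rayleigh random variables with scale
parameters `σ₁ > 0` and `σ₂ > 0`, then for every `q > 0`,
`P(XY > q) = x·K₁(x)` with `x = q/(σ₁σ₂)`, where
`K₁(x) = ∫_0^∞ exp(−x cosh t) cosh t dt` is the modified Bessel function of the second
kind of order 1 (in its integral representation). -/
theorem rayleigh_product_tail
    {Ω : Type*} [MeasurableSpace Ω] {P : Measure Ω} [IsProbabilityMeasure P]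
    (σ₁ σ₂ : ℝ) (hσ₁ : 0 < σ₁) (hσ₂ : 0 < σ₂)
    (X Y : Ω → ℝ) (hX : Measurable X) (hY : Measurable Y)
    (hXlaw : Measure.map X P = rayleighLaw σ₁)
    (hYlaw : Measure.map Y P = rayleighLaw σ₂)
    (hindep : IndepFun X Y P)
    (q : ℝ) (hq : 0 < q) :
    (P {ω | q < X ω * Y ω}).toReal
      = (q / (σ₁ * σ₂)) *
          ∫ t in Set.Ioi (0 : ℝ),
            Real.exp (-(q / (σ₁ * σ₂)) * Real.cosh t) * Real.cosh t := by
  haveI h1 : IsProbabilityMeasure (rayleighLaw σ₁) :=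
    hXlaw ▸ Measure.isProbabilityMeasure_map hX.aemeasurable
  haveI h2 : IsProbabilityMeasure (rayleighLaw σ₂) :=
    hYlaw ▸ Measure.isProbabilityMeasure_map hY.aemeasurable
  have hA : MeasurableSet {p : ℝ × ℝ | q < p.1 * p.2} :=
    measurableSet_lt measurable_const (measurable_fst.mul measurable_snd)
  have hmap : Measure.map (fun ω => (X ω, Y ω)) P
      = (rayleighLaw σ₁).prod (rayleighLaw σ₂) := by
    rw [← hXlaw, ← hYlaw]
    exact (indepFun_iff_map_prod_eq_prod_map_map hX.aemeasurable hY.aemeasurable).mp hindep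
  have hdens₁ : Measurable (fun t : ℝ =>
      ENNReal.ofReal (if 0 ≤ t then t / σ₁ ^ 2 * Real.exp (-t ^ 2 / (2 * σ₁ ^ 2)) else 0)) := by
    apply ENNReal.measurable_ofReal.comp
    exact Measurable.ite measurableSet_Ici
      ((measurable_id.div_const _).mul
        (Real.measurable_exp.comp ((measurable_id.pow_const 2).neg.div_const _)))
      measurable_const
  have hPval : P {ω | q < X ω * Y ω}
      = ∫⁻ s in Ioi (0:ℝ), ENNReal.ofReal (s / σ₁ ^ 2 * Real.exp (-s ^ 2 / (2 * σ₁ ^ 2))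
          * Real.exp (-(q / s) ^ 2 / (2 * σ₂ ^ 2))) := by
    have hset : {ω | q < X ω * Y ω}
        = (fun ω => (X ω, Y ω)) ⁻¹' {p : ℝ × ℝ | q < p.1 * p.2} := rfl
    rw [hset, ← Measure.map_apply (hX.prodMk hY) hA, hmap, Measure.prod_apply hA]
    rw [show rayleighLaw σ₁ = MeasureTheory.volume.withDensity (fun t =>
      ENNReal.ofReal (if 0 ≤ t then t / σ₁ ^ 2 * Real.exp (-t ^ 2 / (2 * σ₁ ^ 2)) else 0))
      from rfl]
    rw [lintegral_withDensity_eq_lintegral_mul _ hdens₁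
      (measurable_measure_prodMk_left hA)]
    rw [← lintegral_indicator measurableSet_Ioi]
    refine lintegral_congr fun s => ?_
    by_cases hs : 0 < s
    · have hpre : Prod.mk s ⁻¹' {p : ℝ × ℝ | q < p.1 * p.2} = Ioi (q / s) := by
        ext t
        simp only [mem_preimage, mem_setOf_eq, mem_Ioi]
        rw [div_lt_iff₀ hs, mul_comm]
      rw [Set.indicator_of_mem (mem_Ioi.mpr hs)]
      simp only [Pi.mul_apply]
      rw [hpre, rayleigh_tail σ₂ hσ₂ (div_nonneg hq.le hs.le), if_pos hs.le,
        ← ENNReal.ofReal_mul (mul_nonneg (by positivity) (Real.exp_pos _).le)]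
    · rw [Set.indicator_of_notMem (fun hmem => hs (mem_Ioi.mp hmem))]
      simp only [Pi.mul_apply]
      rcases eq_or_lt_of_le (not_lt.mp hs) with heq | hlt
      · rw [heq]
        simp
      · rw [if_neg (not_le.mpr hlt)]
        simp
  have hnn : ∀ s ∈ Ioi (0:ℝ), 0 ≤ s / σ₁ ^ 2 * Real.exp (-s ^ 2 / (2 * σ₁ ^ 2))
      * Real.exp (-(q / s) ^ 2 / (2 * σ₂ ^ 2)) := fun s hs => by
    have : (0:ℝ) < s := hs
    positivity
  rw [hPval, ← ofReal_integral_eq_lintegral_ofReal (hint_aux σ₁ σ₂ q hσ₁ hσ₂ hq)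
    ((ae_restrict_iff' measurableSet_Ioi).mpr (ae_of_all _ hnn))]
  rw [ENNReal.toReal_ofReal (setIntegral_nonneg measurableSet_Ioi hnn)]
  exact key σ₁ σ₂ q hσ₁ hσ₂ hq
end

section
/- Let ξ_1,…,ξ_M be i.i.d. real random variables with distribution p(ξ), let ζ_1,…,ζ_N be i.i.d. real random variables with distribution p(ζ), all mutually independent, let z = ξ + ζ where ξ, ζ are independent with these distributions, and let φ_1,…,φ_G be a uniform grid. Then the measurement matrix A satisfies the isotropy property — E[A(t,:)ᴴ A(t,:)] = I_G for every row index t — if and only if ψ_z(u_{1,i}) = 0 for every i = 2,…,G, where u_{1,i} = π Z (φ_i − φ_1). -/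
open MeasureTheory ProbabilityTheory

/-- Entry of the random MIMO measurement matrix:
`A_{(m,n),g} = exp(i π Z φ_g (ξ_m + ζ_n))`. -/
noncomputable def measEntry {Ω : Type*} {M N G : ℕ} (Z : ℝ)
    (ξ : Fin M → Ω → ℝ) (ζ : Fin N → Ω → ℝ) (φ : Fin G → ℝ)
    (ω : Ω) (t : Fin M × Fin N) (g : Fin G) : ℂ :=
  Complex.exp (Complex.I * ((Real.pi * Z * φ g * (ξ t.1 ω + ζ t.2 ω) : ℝ) : ℂ))

/-- The characteristic function at `-u` is the conjugate of its value at `u`. -/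
lemma charFn_neg {Ω : Type*} [MeasurableSpace Ω] (P : Measure Ω) (x : Ω → ℝ) (u : ℝ) :
    charFn P x (-u) = (starRingEnd ℂ) (charFn P x u) := by
  unfold charFn
  rw [← integral_conj]
  congr 1
  ext ω
  rw [← Complex.exp_conj]
  congr 1
  simp [Complex.ext_iff]

/-- charFn at 0 is 1 for probability measures. -/
lemma charFn_zero {Ω : Type*} [MeasurableSpace Ω] (P : Measure Ω) [IsProbabilityMeasure P]
    (x : Ω → ℝ) : charFn P x 0 = 1 := by
  unfold charFn
  simp

/-- Equal laws give equal characteristic functions. -/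
lemma charFn_congr {Ω Ω' : Type*} [MeasurableSpace Ω] [MeasurableSpace Ω']
    {P : Measure Ω} {P' : Measure Ω'} {x : Ω → ℝ} {y : Ω' → ℝ}
    (h : IdentDistrib x y P P') (u : ℝ) : charFn P x u = charFn P' y u := by
  unfold charFn
  exact (h.comp (by fun_prop : Measurable fun r : ℝ =>
    Complex.exp (Complex.I * ((u * r : ℝ) : ℂ)))).integral_eq

/-- with i.i.d. transmitter positions (law of `ξ0`), i.i.d. receiver
positions (law of `ζ0`), all mutually independent, and a uniform grid `φ`, the
measurement matrix `A` satisfies the isotropy property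
`E[A(t,:)ᴴ A(t,:)] = I_G` for every row `t`, if and only if
`ψ_z(u_{1,i}) = 0` for all `i = 2,…,G`, where `z = ξ0 + ζ0` and
`u_{1,i} = π Z (φ_i − φ_1)`. -/
theorem isotropy_iff_charFun_vanishes
    {Ω Ω' : Type*} [MeasurableSpace Ω] [MeasurableSpace Ω']
    {P : Measure Ω} [IsProbabilityMeasure P] {P' : Measure Ω'} [IsProbabilityMeasure P']
    {M N G : ℕ} (hM : 0 < M) (hN : 0 < N) (hG : 0 < G)
    (Z : ℝ) (hZ : 0 < Z)
    (ξ : Fin M → Ω → ℝ) (ζ : Fin N → Ω → ℝ)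
    (hξm : ∀ m, Measurable (ξ m)) (hζm : ∀ n, Measurable (ζ n))
    (ξ0 ζ0 : Ω' → ℝ) (hξ0 : Measurable ξ0) (hζ0 : Measurable ζ0)
    (hindep : iIndepFun (Sum.elim ξ ζ) P)
    (hξid : ∀ m, IdentDistrib (ξ m) ξ0 P P')
    (hζid : ∀ n, IdentDistrib (ζ n) ζ0 P P')
    (hind0 : IndepFun ξ0 ζ0 P')
    (φ : Fin G → ℝ) (φ1 Δ : ℝ) (hgrid : ∀ g : Fin G, φ g = φ1 + (g : ℝ) * Δ) :
    (∀ t : Fin M × Fin N,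
        Matrix.of (fun i l : Fin G =>
            ∫ ω, (starRingEnd ℂ) (measEntry Z ξ ζ φ ω t i) * measEntry Z ξ ζ φ ω t l ∂P)
          = (1 : Matrix (Fin G) (Fin G) ℂ))
      ↔ ∀ i : Fin G, i ≠ ⟨0, hG⟩ →
          charFn P' (fun ω' => ξ0 ω' + ζ0 ω')
            (Real.pi * Z * (φ i - φ ⟨0, hG⟩)) = 0 := by
  -- the sum ξ_m + ζ_n is identically distributed with ξ0 + ζ0
  have hsum : ∀ t : Fin M × Fin N,
      IdentDistrib (fun ω => ξ t.1 ω + ζ t.2 ω) (fun ω' => ξ0 ω' + ζ0 ω') P P' := by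
    intro ⟨m, n⟩
    have hind : IndepFun (ξ m) (ζ n) P := by
      have := hindep.indepFun (i := Sum.inl m) (j := Sum.inr n) (by simp)
      simpa using this
    have hpair : IdentDistrib (fun ω => (ξ m ω, ζ n ω)) (fun ω' => (ξ0 ω', ζ0 ω')) P P' := by
      refine ⟨((hξm m).prodMk (hζm n)).aemeasurable, (hξ0.prodMk hζ0).aemeasurable, ?_⟩
      rw [(indepFun_iff_map_prod_eq_prod_map_map (hξm m).aemeasurable
        (hζm n).aemeasurable).mp hind,
        (indepFun_iff_map_prod_eq_prod_map_map hξ0.aemeasurable hζ0.aemeasurable).mp hind0,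
        (hξid m).map_eq, (hζid n).map_eq]
    exact hpair.comp (measurable_fst.add measurable_snd)
  -- the matrix entry is a value of the characteristic function of the sum
  have hentry : ∀ (t : Fin M × Fin N) (i l : Fin G),
      (∫ ω, (starRingEnd ℂ) (measEntry Z ξ ζ φ ω t i) * measEntry Z ξ ζ φ ω t l ∂P)
        = charFn P' (fun ω' => ξ0 ω' + ζ0 ω') (Real.pi * Z * (φ l - φ i)) := by
    intro t i l
    rw [← charFn_congr (hsum t)]
    unfold charFn
    congr 1
    ext ω
    unfold measEntry
    rw [← Complex.exp_conj, ← Complex.exp_add]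
    congr 1
    have : (starRingEnd ℂ) Complex.I = -Complex.I := Complex.conj_I
    simp only [map_mul, this, Complex.conj_ofReal]
    push_cast
    ring
  constructor
  · intro h i hi
    have ht := h (⟨0, hM⟩, ⟨0, hN⟩)
    have := congrFun (congrFun ht ⟨0, hG⟩) i
    rw [Matrix.of_apply, hentry, Matrix.one_apply_ne (Ne.symm hi)] at this
    exact this
  · intro h t
    -- auxiliary: charFn vanishes at πZ(φ a - φ b) when b < a
    have hvan : ∀ a b : Fin G, b.1 < a.1 →
        charFn P' (fun ω' => ξ0 ω' + ζ0 ω') (Real.pi * Z * (φ a - φ b)) = 0 := by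
      intro a b hab
      have hj : a.1 - b.1 < G := by omega
      have := h ⟨a.1 - b.1, hj⟩ (by simp [Fin.ext_iff]; omega)
      have harg : φ a - φ b = φ ⟨a.1 - b.1, hj⟩ - φ ⟨0, hG⟩ := by
        rw [hgrid, hgrid, hgrid, hgrid]
        have : ((⟨a.1 - b.1, hj⟩ : Fin G) : ℝ) = (a.1 : ℝ) - (b.1 : ℝ) := by
          simp only [Fin.val_mk]
          push_cast [Nat.cast_sub hab.le]
          ring
        simp only [this]
        push_cast
        ring
      rw [harg]
      exact this
    ext i l
    rw [Matrix.of_apply, hentry]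
    by_cases hil : i = l
    · subst hil
      rw [Matrix.one_apply_eq]
      simp [charFn_zero]
    · rw [Matrix.one_apply_ne hil]
      rcases lt_or_gt_of_ne (fun hv => hil (Fin.ext hv) : i.1 ≠ l.1) with hlt | hgt
      · exact hvan l i hlt
      · have : Real.pi * Z * (φ l - φ i) = -(Real.pi * Z * (φ i - φ l)) := by ring
        rw [this, charFn_neg, hvan i l hgt, map_zero]
end
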